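/- Let X = ℝ^m with the Euclidean norm and let f : X → ℝ be twice continuously differentiable with positive definite Hessian at each point. Suppose there exist ρ ∈ (0,1), r > 0 and β > 0 such that inf{⟨f''(x)w, w⟩ : ‖w‖ = 1} ≥ β/‖x‖^ρ for all x with ‖x‖ ≥ r. Then f is super-coercive, i.e., lim_{‖x‖→∞} f(x)/‖x‖ = ∞. -/

import Mathlib

open Set Filter

lemma taylor_lb_aux {g g1 g2 : ℝ → ℝ} {a b c : ℝ} (hab : a ≤ b)
    (hg : ∀ t, HasDerivAt g (g1 t) t) (hg1 : ∀ t, HasDerivAt g1 (g2 t) t)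
    (hc : ∀ t ∈ Set.Icc a b, c ≤ g2 t) :
    g a + g1 a * (b - a) + c / 2 * (b - a) ^ 2 ≤ g b := by
  set ψ' : ℝ → ℝ := fun t => g1 t - g1 a - c * (t - a) with hψ'
  set ψ : ℝ → ℝ := fun t => g t - g a - g1 a * (t - a) - c / 2 * (t - a) ^ 2 with hψ
  have h1 : ∀ t : ℝ, HasDerivAt (fun s => s - a) 1 t := fun t => (hasDerivAt_id t).sub_const a
  have hψ'd : ∀ t, HasDerivAt ψ' (g2 t - c) t := by
    intro t
    have := ((hg1 t).sub_const (g1 a)).sub ((h1 t).const_mul c)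
    exact this.congr_deriv (by ring)
  have hψd : ∀ t, HasDerivAt ψ (ψ' t) t := by
    intro t
    have h3 : HasDerivAt (fun s : ℝ => (s - a) ^ 2) ((2 : ℕ) * (t - a) ^ 1 * 1) t :=
      (h1 t).pow 2
    have := (((hg t).sub_const (g a)).sub ((h1 t).const_mul (g1 a))).sub
      (h3.const_mul (c / 2))
    exact this.congr_deriv (by push_cast; ring)
  have mono1 : MonotoneOn ψ' (Icc a b) := by
    apply monotoneOn_of_deriv_nonneg (convex_Icc a b)
    · exact fun t _ => (hψ'd t).continuousAt.continuousWithinAt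
    · exact fun t _ => (hψ'd t).differentiableAt.differentiableWithinAt
    · intro t ht
      rw [interior_Icc] at ht
      rw [(hψ'd t).deriv]
      have := hc t (Ioo_subset_Icc_self ht)
      linarith
  have hψ'nonneg : ∀ t ∈ Icc a b, 0 ≤ ψ' t := by
    intro t ht
    have := mono1 (left_mem_Icc.2 hab) ht ht.1
    have ha : ψ' a = 0 := by simp [hψ']
    linarith
  have mono2 : MonotoneOn ψ (Icc a b) := by
    apply monotoneOn_of_deriv_nonneg (convex_Icc a b)
    · exact fun t _ => (hψd t).continuousAt.continuousWithinAt
    · exact fun t _ => (hψd t).differentiableAt.differentiableWithinAt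
    · intro t ht
      rw [interior_Icc] at ht
      rw [(hψd t).deriv]
      exact hψ'nonneg t (Ioo_subset_Icc_self ht)
  have := mono2 (left_mem_Icc.2 hab) (right_mem_Icc.2 hab) hab
  simp only [hψ] at this
  simp only [sub_self, mul_zero, ne_eq, OfNat.ofNat_ne_zero, not_false_eq_true,
    zero_pow, sub_zero] at this
  linarith


/-- A twice continuously differentiable function on `ℝ^m` with
positive definite Hessian satisfying the asymptotically slow decay condition
`inf{⟨f''(x)w,w⟩ : ‖w‖ = 1} ≥ β/‖x‖^ρ` for `‖x‖ ≥ r` (with `ρ ∈ (0,1)`,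
`r > 0`, `β > 0`) is super-coercive: `f(x)/‖x‖ → ∞` as `‖x‖ → ∞`. -/
theorem slow_hessian_decay_supercoercive (m : ℕ)
    (f : EuclideanSpace ℝ (Fin m) → ℝ) (hf : ContDiff ℝ 2 f)
    (hpd : ∀ x w, w ≠ 0 → 0 < fderiv ℝ (fderiv ℝ f) x w w)
    (ρ r β : ℝ) (hρ : ρ ∈ Set.Ioo (0:ℝ) 1) (hr : 0 < r) (hβ : 0 < β)
    (hdecay : ∀ x, r ≤ ‖x‖ → ∀ w, ‖w‖ = 1 →
      β / ‖x‖ ^ ρ ≤ fderiv ℝ (fderiv ℝ f) x w w) :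
    Filter.Tendsto (fun x => f x / ‖x‖) (Filter.comap norm Filter.atTop)
      Filter.atTop := by
  obtain ⟨hρ0, hρ1⟩ := hρ
  have hdiff : Differentiable ℝ f := hf.differentiable two_ne_zero
  have hdf : ContDiff ℝ 1 (fderiv ℝ f) := hf.fderiv_right (le_refl 2)
  have hdiff2 : Differentiable ℝ (fderiv ℝ f) := hdf.differentiable one_ne_zero
  obtain ⟨C₁, hC₁⟩ := (isCompact_sphere (0 : EuclideanSpace ℝ (Fin m)) r).exists_bound_of_continuousOn
    hf.continuous.continuousOn
  obtain ⟨C₂, hC₂⟩ := (isCompact_sphere (0 : EuclideanSpace ℝ (Fin m)) r).exists_bound_of_continuousOn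
    (hdf.continuous.continuousOn)
  set A := max C₁ 0 with hA
  set B := max C₂ 0 with hB
  have hA0 : 0 ≤ A := le_max_right _ _
  have hB0 : 0 ≤ B := le_max_right _ _
  have key : ∀ x : EuclideanSpace ℝ (Fin m), max (2 * r) 1 ≤ ‖x‖ →
      β / 8 * ‖x‖ ^ (1 - ρ) - A - B ≤ f x / ‖x‖ := by
    intro x hx
    set T := ‖x‖ with hTdef
    have hT1 : 1 ≤ T := le_trans (le_max_right _ _) hx
    have hT2r : 2 * r ≤ T := le_trans (le_max_left _ _) hx
    have hT0 : (0 : ℝ) < T := lt_of_lt_of_le one_pos hT1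
    have hrT : r < T := by linarith
    set u := T⁻¹ • x with hu_def
    have hu : ‖u‖ = 1 := by
      rw [hu_def, norm_smul, norm_inv, Real.norm_eq_abs, abs_of_pos hT0, ← hTdef,
        inv_mul_cancel₀ (ne_of_gt hT0)]
    have hTu : T • u = x := smul_inv_smul₀ (ne_of_gt hT0) x
    have hcurve : ∀ t : ℝ, HasDerivAt (fun s : ℝ => s • u) u t := by
      intro t
      simpa using (hasDerivAt_id t).smul_const u
    have hgd : ∀ t : ℝ, HasDerivAt (fun s => f (s • u)) (fderiv ℝ f (t • u) u) t := by
      intro t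
      exact (hdiff (t • u)).hasFDerivAt.comp_hasDerivAt t (hcurve t)
    have hg1d : ∀ t : ℝ, HasDerivAt (fun s => fderiv ℝ f (s • u) u)
        (fderiv ℝ (fderiv ℝ f) (t • u) u u) t := by
      intro t
      have h1 : HasFDerivAt (fderiv ℝ f) (fderiv ℝ (fderiv ℝ f) (t • u)) (t • u) :=
        (hdiff2 (t • u)).hasFDerivAt
      have h2 := ((ContinuousLinearMap.apply ℝ ℝ u).hasFDerivAt).comp (t • u) h1
      have h3 := h2.comp_hasDerivAt t (hcurve t)
      exact h3
    have hc : ∀ t ∈ Icc r T, β / T ^ ρ ≤ fderiv ℝ (fderiv ℝ f) (t • u) u u := by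
      intro t ht
      have ht0 : (0 : ℝ) < t := lt_of_lt_of_le hr ht.1
      have hnorm : ‖t • u‖ = t := by
        rw [norm_smul, hu, mul_one, Real.norm_eq_abs, abs_of_pos ht0]
      have hd := hdecay (t • u) (by rw [hnorm]; exact ht.1) u hu
      rw [hnorm] at hd
      refine le_trans ?_ hd
      have hle : t ^ ρ ≤ T ^ ρ := Real.rpow_le_rpow ht0.le ht.2 hρ0.le
      exact div_le_div_of_nonneg_left hβ.le (Real.rpow_pos_of_pos ht0 ρ) hle
    have htay := taylor_lb_aux (a := r) (b := T) (c := β / T ^ ρ) hrT.le hgd hg1d hc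
    rw [hTu] at htay
    -- bounds for g r and g1 r
    have hmem : r • u ∈ Metric.sphere (0 : EuclideanSpace ℝ (Fin m)) r := by
      rw [mem_sphere_zero_iff_norm, norm_smul, hu, mul_one, Real.norm_eq_abs, abs_of_pos hr]
    have hgr : -A ≤ f (r • u) := by
      have := le_trans (hC₁ _ hmem) (le_max_left C₁ 0)
      rw [Real.norm_eq_abs] at this
      linarith [neg_abs_le (f (r • u))]
    have hg1r : -B ≤ fderiv ℝ f (r • u) u := by
      have h1 : ‖fderiv ℝ f (r • u) u‖ ≤ ‖fderiv ℝ f (r • u)‖ * ‖u‖ :=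
        (fderiv ℝ f (r • u)).le_opNorm u
      rw [hu, mul_one, Real.norm_eq_abs] at h1
      have h2 := le_trans (le_trans h1 (hC₂ _ hmem)) (le_max_left C₂ 0)
      linarith [neg_abs_le (fderiv ℝ f (r • u) u)]
    have hQ0 : (0 : ℝ) < T ^ ρ := Real.rpow_pos_of_pos hT0 ρ
    have hstep1 : -B * T ≤ fderiv ℝ f (r • u) u * (T - r) := by
      have h1 : (-B) * (T - r) ≤ fderiv ℝ f (r • u) u * (T - r) :=
        mul_le_mul_of_nonneg_right hg1r (by linarith)
      nlinarith [mul_nonneg hB0 hr.le]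
    have hstep2 : β / 8 * (T ^ 2 / T ^ ρ) ≤ (β / T ^ ρ) / 2 * (T - r) ^ 2 := by
      have h5 : (T / 2) ^ 2 ≤ (T - r) ^ 2 := by nlinarith
      have h6 := mul_le_mul_of_nonneg_left h5 (by positivity : (0:ℝ) ≤ (β / T ^ ρ) / 2)
      have h7 : (β / T ^ ρ) / 2 * (T / 2) ^ 2 = β / 8 * (T ^ 2 / T ^ ρ) := by ring
      linarith
    have H : -A - B * T + β / 8 * (T ^ 2 / T ^ ρ) ≤ f x := by linarith
    rw [le_div_iff₀ hT0]
    have e1 : T ^ (1 - ρ) * T = T ^ 2 / T ^ ρ := by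
      rw [Real.rpow_sub hT0, Real.rpow_one, div_mul_eq_mul_div, ← sq]
    have e2 : (β / 8 * T ^ (1 - ρ) - A - B) * T
        = β / 8 * (T ^ 2 / T ^ ρ) - A * T - B * T := by
      rw [← e1]; ring
    rw [e2]
    have hAT : A * 1 ≤ A * T := mul_le_mul_of_nonneg_left hT1 hA0
    linarith
  have hlim : Tendsto (fun T : ℝ => β / 8 * T ^ (1 - ρ) - A - B) atTop atTop := by
    have h0 : Tendsto (fun T : ℝ => T ^ (1 - ρ)) atTop atTop :=
      tendsto_rpow_atTop (by linarith)
    have h1 : Tendsto (fun T : ℝ => β / 8 * T ^ (1 - ρ)) atTop atTop :=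
      h0.const_mul_atTop (by positivity)
    have h2 := tendsto_atTop_add_const_right atTop (-A - B) h1
    exact h2.congr (fun T => by ring)
  rw [Filter.tendsto_atTop]
  intro b
  obtain ⟨T₀, hT₀⟩ := Filter.eventually_atTop.mp (Filter.tendsto_atTop.mp hlim b)
  rw [Filter.eventually_comap]
  filter_upwards [Filter.eventually_ge_atTop (max T₀ (max (2 * r) 1))] with T hT x hxT
  have hx1 : max (2 * r) 1 ≤ ‖x‖ := by
    rw [hxT]; exact le_trans (le_max_right _ _) hT
  have hx2 : T₀ ≤ ‖x‖ := by
    rw [hxT]; exact le_trans (le_max_left _ _) hT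
  exact le_trans (hT₀ ‖x‖ hx2) (key x hx1)
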